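/- arXiv:2509.18784 — 2 statements merged into one kernel-verified Lean document; each statement's English description precedes it below -/
import Mathlib

section
/- Let G and H be connected graphs with |V(G)| ≥ 3 and |V(H)| ≥ 2. If {g_1, g_2} is a monophonic set of G, then for any vertex h of H, the set {(g_1,h), (g_2,h)} is a monophonic set of the Cartesian product G □ H. -/
open SimpleGraph

variable {V : Type*}

/-- A walk is an induced path if it is a path and every edge of the graph between
vertices of the walk is an edge of the walk. -/
def IsInducedPath (G : SimpleGraph V) {u v : V} (p : G.Walk u v) : Prop :=
  p.IsPath ∧ ∀ a b : V, a ∈ p.support → b ∈ p.support → G.Adj a b → p.toSubgraph.Adj a b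

/-- The monophonic interval: all vertices lying on some induced `u,v`-path. -/
def monoInterval (G : SimpleGraph V) (u v : V) : Set V :=
  {w | ∃ p : G.Walk u v, IsInducedPath G p ∧ w ∈ p.support}

/-- A set `S` is monophonic if every vertex lies in the monophonic interval
of some pair of vertices of `S`. -/
def IsMonophonicSet (G : SimpleGraph V) (S : Set V) : Prop :=
  ∀ w : V, ∃ x ∈ S, ∃ y ∈ S, w ∈ monoInterval G x y

/-- The monophonic number: least cardinality of a monophonic set. -/
noncomputable def monophonicNumber (G : SimpleGraph V) : ℕ :=
  sInf {n : ℕ | ∃ S : Finset V, S.card = n ∧ IsMonophonicSet G (S : Set V)}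

/-- A graph is strongly 2-monophonic if every pair of non-adjacent vertices is
a monophonic set. -/
def Strongly2Monophonic (G : SimpleGraph V) : Prop :=
  ∀ x y : V, x ≠ y → ¬ G.Adj x y → IsMonophonicSet G {x, y}

/-- A closed walk is an induced cycle if it is a cycle and every edge of the graph
between vertices of the walk is an edge of the walk. -/
def IsInducedCycle (G : SimpleGraph V) {a : V} (w : G.Walk a a) : Prop :=
  w.IsCycle ∧ ∀ u v : V, u ∈ w.support → v ∈ w.support → G.Adj u v → w.toSubgraph.Adj u v

/-- The Kneser graph `K(n,r)`: vertices are `r`-subsets of `[n]`, adjacent iff disjoint. -/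
def kneser (n r : ℕ) : SimpleGraph {s : Finset (Fin n) // s.card = r} where
  Adj a b := a ≠ b ∧ Disjoint a.1 b.1
  symm := ⟨fun _ _ h => ⟨h.1.symm, h.2.symm⟩⟩
  loopless := ⟨fun _ h => h.1 rfl⟩

/-- The Johnson graph `J(n,r)`: vertices are `r`-subsets of `[n]`, adjacent iff the
intersection has `r-1` elements. -/
def johnson (n r : ℕ) : SimpleGraph {s : Finset (Fin n) // s.card = r} where
  Adj a b := a ≠ b ∧ (a.1 ∩ b.1).card = r - 1
  symm := ⟨fun _ _ h => ⟨h.1.symm, by rw [Finset.inter_comm]; exact h.2⟩⟩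
  loopless := ⟨fun _ h => h.1 rfl⟩


section Aux
variable {V W U : Type*} {G : SimpleGraph V} {H : SimpleGraph W} {K : SimpleGraph U}

lemma toSub_adj_iff' {u v x y : V} (p : G.Walk u v) :
    p.toSubgraph.Adj x y ↔ s(x, y) ∈ p.edges := by
  rw [← SimpleGraph.Subgraph.mem_edgeSet, Walk.mem_edges_toSubgraph]

lemma map_toSub_adj (f : G →g K) {u v x y : V} (p : G.Walk u v)
    (hxy : p.toSubgraph.Adj x y) : (p.map f).toSubgraph.Adj (f x) (f y) := by
  rw [Walk.toSubgraph_map]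
  exact ⟨x, y, hxy, rfl, rfl⟩

lemma induced_reverse {u v : V} {p : G.Walk u v} (hp : IsInducedPath G p) :
    IsInducedPath G p.reverse := by
  refine ⟨hp.1.reverse, fun a b ha hb hab => ?_⟩
  rw [Walk.toSubgraph_reverse]
  rw [Walk.support_reverse, List.mem_reverse] at ha hb
  exact hp.2 a b ha hb hab

lemma singleEdge_induced {x y : V} (e : G.Adj x y) :
    IsInducedPath G (Walk.cons e Walk.nil) := by
  constructor
  · simp [e.ne]
  · intro a b ha hb hab
    simp only [Walk.support_cons, Walk.support_nil, List.mem_cons, List.mem_singleton,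
      List.not_mem_nil, or_false] at ha hb
    rw [Walk.toSubgraph_cons_nil_eq_subgraphOfAdj, SimpleGraph.subgraphOfAdj_adj]
    rcases ha with rfl | rfl <;> rcases hb with rfl | rfl
    · exact absurd hab (G.loopless.irrefl _)
    · rfl
    · exact (Sym2.eq_swap)
    · exact absurd hab (G.loopless.irrefl _)

lemma map_induced (f : G →g K) (hinj : Function.Injective f)
    {u v : V} {p : G.Walk u v} (hp : p.IsPath)
    (hind : ∀ a b, a ∈ p.support → b ∈ p.support → K.Adj (f a) (f b) → p.toSubgraph.Adj a b) :
    IsInducedPath K (p.map f) := by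
  refine ⟨Walk.map_isPath_of_injective hinj hp, ?_⟩
  intro a b ha hb hab
  rw [Walk.support_map, List.mem_map] at ha hb
  obtain ⟨a', ha', rfl⟩ := ha
  obtain ⟨b', hb', rfl⟩ := hb
  exact map_toSub_adj f _ (hind a' b' ha' hb' hab)

lemma append_induced {x y z : V} {p : G.Walk x y} {q : G.Walk y z}
    (hp : IsInducedPath G p) (hq : IsInducedPath G q)
    (hmeet : ∀ v, v ∈ p.support → v ∈ q.support → v = y)
    (hcross : ∀ a b, a ∈ p.support → b ∈ q.support → a ≠ y → b ≠ y → ¬ G.Adj a b) :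
    IsInducedPath G (p.append q) := by
  have hys : y ∉ q.support.tail := by
    have h1 := hq.1.support_nodup
    rw [q.support_eq_cons] at h1
    exact (List.nodup_cons.mp h1).1
  have hpath : (p.append q).IsPath := by
    rw [Walk.isPath_def, Walk.support_append]
    refine List.Nodup.append hp.1.support_nodup hq.1.support_nodup.tail ?_
    intro v hv hv'
    have : v = y := hmeet v hv (List.mem_of_mem_tail hv')
    exact hys (this ▸ hv')
  refine ⟨hpath, fun a b ha hb hab => ?_⟩
  rw [Walk.mem_support_append_iff] at ha hb
  rw [Walk.toSubgraph_append, Subgraph.sup_adj]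
  have inp : ∀ {a b : V}, a ∈ p.support → b ∈ p.support → G.Adj a b →
      p.toSubgraph.Adj a b ∨ q.toSubgraph.Adj a b := fun ha hb hab => Or.inl (hp.2 _ _ ha hb hab)
  have inq : ∀ {a b : V}, a ∈ q.support → b ∈ q.support → G.Adj a b →
      p.toSubgraph.Adj a b ∨ q.toSubgraph.Adj a b := fun ha hb hab => Or.inr (hq.2 _ _ ha hb hab)
  rcases ha with ha | ha <;> rcases hb with hb | hb
  · exact inp ha hb hab
  · by_cases hay : a = y
    · exact inq (hay ▸ q.start_mem_support) hb hab
    · by_cases hby : b = y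
      · exact inp ha (hby ▸ p.end_mem_support) hab
      · exact absurd hab (hcross a b ha hb hay hby)
  · by_cases hay : a = y
    · exact inp (hay ▸ p.end_mem_support) hb hab
    · by_cases hby : b = y
      · exact inq ha (hby ▸ q.start_mem_support) hab
      · exact absurd hab.symm (hcross b a hb ha hby hay)
  · exact inq ha hb hab

lemma dropUntil_induced [DecidableEq V] {x v b : V} {q : G.Walk x v}
    (hq : IsInducedPath G q) (hb : b ∈ q.support) :
    IsInducedPath G (q.dropUntil b hb) := by
  refine ⟨hq.1.dropUntil hb, fun a c ha hc hac => ?_⟩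
  have hsub : ∀ {z : V}, z ∈ (q.dropUntil b hb).support → z ∈ q.support :=
    fun hz => q.support_dropUntil_subset hb hz
  have := hq.2 a c (hsub ha) (hsub hc) hac
  rw [toSub_adj_iff'] at this
  have hedge : s(a, c) ∈ (q.takeUntil b hb).edges ∨ s(a, c) ∈ (q.dropUntil b hb).edges := by
    rw [← List.mem_append, ← Walk.edges_append, q.take_spec hb]
    exact this
  rcases hedge with he | he
  · exfalso
    -- a, c ∈ takeUntil support and dropUntil support, so both = b, contra adj
    have hnd := hq.1.support_nodup
    rw [← q.take_spec hb, Walk.support_append] at hnd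
    have hdisj := (List.nodup_append.mp hnd).2.2
    have key : ∀ {z : V}, z ∈ (q.takeUntil b hb).support → z ∈ (q.dropUntil b hb).support → z = b := by
      intro z h1 h2
      rw [(q.dropUntil b hb).support_eq_cons, List.mem_cons] at h2
      rcases h2 with h2 | h2
      · exact h2
      · exact absurd rfl (hdisj z h1 z h2)
    have ha' := key (Walk.fst_mem_support_of_mem_edges _ he) ha
    have hc' := key (Walk.snd_mem_support_of_mem_edges _ he) hc
    rw [ha', hc'] at hac
    exact (G.loopless.irrefl _) hac
  · rw [toSub_adj_iff']; exact he


lemma nil_induced (u : V) : IsInducedPath G (Walk.nil : G.Walk u u) := by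
  refine ⟨Walk.IsPath.nil, fun a b ha hb hab => ?_⟩
  simp only [Walk.support_nil, List.mem_singleton] at ha hb
  subst ha; subst hb
  exact absurd hab (G.loopless.irrefl _)

lemma extend_induced [DecidableEq V] : ∀ (n : ℕ) {x v u : V} (q : G.Walk x v), q.length ≤ n →
    IsInducedPath G q → G.Adj u x → u ∉ q.support →
    ∃ r : G.Walk u v, IsInducedPath G r := by
  intro n
  induction n with
  | zero =>
    intro x v u q hlen hq hadj hu
    refine ⟨Walk.cons hadj q, ⟨(Walk.cons_isPath_iff _ _).mpr ⟨hq.1, hu⟩, ?_⟩⟩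
    intro a b ha hb hab
    have hsupp : ∀ {z : V}, z ∈ q.support → z = x := by
      intro z hz
      obtain ⟨i, hgi, hile⟩ := Walk.mem_support_iff_exists_getVert.mp hz
      have : i = 0 := by omega
      subst this; rw [Walk.getVert_zero] at hgi; exact hgi.symm
    simp only [Walk.support_cons, List.mem_cons] at ha hb
    have ha' : a = u ∨ a = x := ha.imp id hsupp
    have hb' : b = u ∨ b = x := hb.imp id hsupp
    rw [Walk.toSubgraph, Subgraph.sup_adj]
    rcases ha' with rfl | rfl <;> rcases hb' with rfl | rfl
    · exact absurd hab (G.loopless.irrefl _)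
    · exact Or.inl (by simp)
    · exact Or.inl (by simp [Sym2.eq_swap])
    · exact absurd hab (G.loopless.irrefl _)
  | succ n ih =>
    intro x v u q hlen hq hadj hu
    by_cases hchord : ∃ b ∈ q.support, b ≠ x ∧ G.Adj u b
    · obtain ⟨b, hb, hbx, hub⟩ := hchord
      have hlen2 : (q.dropUntil b hb).length ≤ n := by
        have hspec := congrArg Walk.length (q.take_spec hb)
        rw [Walk.length_append] at hspec
        have htk : (q.takeUntil b hb).length ≠ 0 := by
          intro h0
          exact hbx (Walk.eq_of_length_eq_zero h0).symm
        omega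
      refine ih (q.dropUntil b hb) hlen2 (dropUntil_induced hq hb) hub ?_
      intro hmem
      exact hu (q.support_dropUntil_subset hb hmem)
    · push_neg at hchord
      refine ⟨Walk.cons hadj q, ⟨(Walk.cons_isPath_iff _ _).mpr ⟨hq.1, hu⟩, ?_⟩⟩
      intro a b ha hb hab
      simp only [Walk.support_cons, List.mem_cons] at ha hb
      rw [Walk.toSubgraph, Subgraph.sup_adj]
      rcases ha with rfl | ha <;> rcases hb with rfl | hb
      · exact absurd hab (G.loopless.irrefl _)
      · have : b = x := by
          by_contra hbx
          exact (hchord b hb hbx) hab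
        subst this; exact Or.inl (by simp)
      · have : a = x := by
          by_contra hax
          exact (hchord a ha hax) hab.symm
        subst this; exact Or.inl (by simp [Sym2.eq_swap])
      · exact Or.inr (hq.2 a b ha hb hab)

lemma exists_induced [DecidableEq V] {u v : V} (r : G.Walk u v) :
    ∃ q : G.Walk u v, IsInducedPath G q := by
  induction r with
  | nil => exact ⟨Walk.nil, nil_induced _⟩
  | @cons u x v hadj r ih =>
    obtain ⟨q, hq⟩ := ih
    by_cases hu : u ∈ q.support
    · exact ⟨q.dropUntil u hu, dropUntil_induced hq hu⟩
    · exact extend_induced q.length q le_rfl hq hadj hu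


end Aux

section Core
variable {V W : Type*} (G : SimpleGraph V) (H : SimpleGraph W)

/-- The hom `G → G □ H` at height `b`. -/
def fL (b : W) : G →g G □ H where
  toFun x := (x, b)
  map_rel' := fun hadj => Or.inl ⟨hadj, rfl⟩

/-- The hom `H → G □ H` at column `z`. -/
def fR (z : V) : H →g G □ H where
  toFun q := (z, q)
  map_rel' := fun hadj => Or.inr ⟨hadj, rfl⟩

@[simp] lemma fL_apply (b : W) (x : V) : fL G H b x = (x, b) := rfl
@[simp] lemma fR_apply (z : V) (q : W) : fR G H z q = (z, q) := rfl

variable {G H}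

lemma core {g₁ g₂ a t c : V} {h w : W}
    (A : G.Walk g₁ a) (e1 : G.Adj a t) (e2 : G.Adj t c) (B : G.Walk c g₂)
    (hR : IsInducedPath G (A.append (Walk.cons e1 (Walk.cons e2 B))))
    {Q : H.Walk h w} (hQ : IsInducedPath H Q) :
    ∃ p : (G □ H).Walk (g₁, h) (g₂, h), IsInducedPath (G □ H) p ∧
      (a, w) ∈ p.support ∧ (t, w) ∈ p.support ∧ (c, w) ∈ p.support := by
  set R := A.append (Walk.cons e1 (Walk.cons e2 B)) with hRdef
  -- support and nodup facts
  have hsupR : R.support = A.support ++ t :: B.support := by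
    simp [hRdef, Walk.support_append, Walk.support_cons]
  have hnodup : (A.support ++ t :: B.support).Nodup := hsupR ▸ hR.1.support_nodup
  obtain ⟨hndA, hndtB, hdisjAtB⟩ := List.nodup_append.mp hnodup
  have htB : t ∉ B.support := (List.nodup_cons.mp hndtB).1
  have hndB : B.support.Nodup := (List.nodup_cons.mp hndtB).2
  have htA : t ∉ A.support := fun hmem => hdisjAtB t hmem t List.mem_cons_self rfl
  have hAB : ∀ {z : V}, z ∈ A.support → z ∈ B.support → False :=
    fun h1 h2 => hdisjAtB _ h1 _ (List.mem_cons_of_mem _ h2) rfl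
  have haA : a ∈ A.support := A.end_mem_support
  have hcB : c ∈ B.support := B.start_mem_support
  have hat : a ≠ t := e1.ne
  have htc : t ≠ c := e2.ne
  have hcA : c ∉ A.support := fun hc' => hAB hc' hcB
  have haB : a ∉ B.support := fun ha' => hAB haA ha'
  have hac : a ≠ c := fun e => hcA (e ▸ haA)
  have hpA : A.IsPath := (Walk.isPath_def _).mpr hndA
  have hpB : B.IsPath := (Walk.isPath_def _).mpr hndB
  -- edges of R
  have hedR : R.edges = A.edges ++ s(a, t) :: s(t, c) :: B.edges := by
    simp [hRdef, Walk.edges_append, Walk.edges_cons]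
  have hmemR : ∀ {z : V}, z ∈ A.support ∨ z = t ∨ z ∈ B.support → z ∈ R.support := by
    intro z hz
    rw [hsupR, List.mem_append, List.mem_cons]
    tauto
  have hchord : ∀ {x y : V}, (x ∈ A.support ∨ x = t ∨ x ∈ B.support) →
      (y ∈ A.support ∨ y = t ∨ y ∈ B.support) → G.Adj x y →
      s(x, y) ∈ A.edges ∨ s(x, y) = s(a, t) ∨ s(x, y) = s(t, c) ∨ s(x, y) ∈ B.edges := by
    intro x y hx hy hxy
    have := hR.2 x y (hmemR hx) (hmemR hy) hxy
    rw [toSub_adj_iff', hedR] at this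
    simpa [List.mem_append, List.mem_cons] using this
  have hEA : ∀ {x y : V}, s(x, y) ∈ A.edges → x ∈ A.support ∧ y ∈ A.support :=
    fun he => ⟨Walk.fst_mem_support_of_mem_edges _ he, Walk.snd_mem_support_of_mem_edges _ he⟩
  have hEB : ∀ {x y : V}, s(x, y) ∈ B.edges → x ∈ B.support ∧ y ∈ B.support :=
    fun he => ⟨Walk.fst_mem_support_of_mem_edges _ he, Walk.snd_mem_support_of_mem_edges _ he⟩
  -- chord dichotomies
  have CA : ∀ {x y : V}, x ∈ A.support → y ∈ A.support → G.Adj x y → A.toSubgraph.Adj x y := by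
    intro x y hx hy hxy
    rcases hchord (Or.inl hx) (Or.inl hy) hxy with he | he | he | he
    · exact (toSub_adj_iff' _).mpr he
    · rcases Sym2.eq_iff.mp he with ⟨_, rfl⟩ | ⟨rfl, _⟩
      · exact absurd hy htA
      · exact absurd hx htA
    · rcases Sym2.eq_iff.mp he with ⟨rfl, _⟩ | ⟨rfl, _⟩
      · exact absurd hx htA
      · exact absurd hx hcA
    · exact absurd (hEB he).1 (fun h' => hAB hx h')
  have CB : ∀ {x y : V}, x ∈ B.support → y ∈ B.support → G.Adj x y → B.toSubgraph.Adj x y := by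
    intro x y hx hy hxy
    rcases hchord (Or.inr (Or.inr hx)) (Or.inr (Or.inr hy)) hxy with he | he | he | he
    · exact absurd (hEA he).1 (fun h' => hAB h' hx)
    · rcases Sym2.eq_iff.mp he with ⟨_, rfl⟩ | ⟨rfl, _⟩
      · exact absurd hy htB
      · exact absurd hx htB
    · rcases Sym2.eq_iff.mp he with ⟨rfl, _⟩ | ⟨_, rfl⟩
      · exact absurd hx htB
      · exact absurd hy htB
    · exact (toSub_adj_iff' _).mpr he
  have Cat : ∀ {x : V}, x ∈ A.support → G.Adj x t → x = a := by
    intro x hx hxt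
    rcases hchord (Or.inl hx) (Or.inr (Or.inl rfl)) hxt with he | he | he | he
    · exact absurd (hEA he).2 htA
    · rcases Sym2.eq_iff.mp he with ⟨h1, _⟩ | ⟨h1, h2⟩
      · exact h1
      · exact absurd (h1 ▸ hx) htA
    · rcases Sym2.eq_iff.mp he with ⟨h1, h2⟩ | ⟨h1, h2⟩
      · exact absurd (h1 ▸ hx) htA
      · exact absurd (h1 ▸ hx) hcA
    · exact absurd (hEB he).2 htB
  have Ctb : ∀ {x : V}, x ∈ B.support → G.Adj t x → x = c := by
    intro x hx htx
    rcases hchord (Or.inr (Or.inl rfl)) (Or.inr (Or.inr hx)) htx with he | he | he | he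
    · exact absurd (hEA he).1 htA
    · rcases Sym2.eq_iff.mp he with ⟨h1, h2⟩ | ⟨h1, h2⟩
      · exact absurd (h1 ▸ hat) (fun h' => h' rfl)
      · exact absurd (h2 ▸ hx) haB
    · rcases Sym2.eq_iff.mp he with ⟨h1, h2⟩ | ⟨h1, h2⟩
      · exact h2
      · exact absurd (h2 ▸ hx) htB
    · exact absurd (hEB he).1 htB
  have Cab : ∀ {x y : V}, x ∈ A.support → y ∈ B.support → ¬ G.Adj x y := by
    intro x y hx hy hxy
    rcases hchord (Or.inl hx) (Or.inr (Or.inr hy)) hxy with he | he | he | he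
    · exact hAB (hEA he).2 hy
    · rcases Sym2.eq_iff.mp he with ⟨h1, h2⟩ | ⟨h1, h2⟩
      · exact htB (h2 ▸ hy)
      · exact htA (h1 ▸ hx)
    · rcases Sym2.eq_iff.mp he with ⟨h1, h2⟩ | ⟨h1, h2⟩
      · exact htA (h1 ▸ hx)
      · exact hcA (h1 ▸ hx)
    · exact hAB hx (hEB he).1
  -- Q facts
  have hwQ : w ∈ Q.support := Q.end_mem_support
  have hhQ : h ∈ Q.support := Q.start_mem_support
  have CQ : ∀ {q q' : W}, q ∈ Q.support → q' ∈ Q.support → H.Adj q q' → Q.toSubgraph.Adj q q' :=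
    fun hq hq' hadj => hQ.2 _ _ hq hq' hadj
  -- the six walks
  have hinjL : Function.Injective (fL G H h) := fun x y hxy => congrArg Prod.fst hxy
  have hinjRa : Function.Injective (fR G H a) := fun x y hxy => congrArg Prod.snd hxy
  have hinjRc : Function.Injective (fR G H c) := fun x y hxy => congrArg Prod.snd hxy
  let W1 : (G □ H).Walk (g₁, h) (a, h) := A.map (fL G H h)
  let W2 : (G □ H).Walk (a, h) (a, w) := Q.map (fR G H a)
  let W3 : (G □ H).Walk (a, w) (t, w) :=
    Walk.cons (show (G □ H).Adj (a, w) (t, w) from Or.inl ⟨e1, rfl⟩) Walk.nil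
  let W4 : (G □ H).Walk (t, w) (c, w) :=
    Walk.cons (show (G □ H).Adj (t, w) (c, w) from Or.inl ⟨e2, rfl⟩) Walk.nil
  let W5 : (G □ H).Walk (c, w) (c, h) := (Q.map (fR G H c)).reverse
  let W6 : (G □ H).Walk (c, h) (g₂, h) := B.map (fL G H h)
  -- support characterizations
  have mW1 : ∀ z : V × W, z ∈ W1.support ↔ ∃ x ∈ A.support, z = (x, h) := by
    intro z
    rw [show W1.support = A.support.map (fL G H h) from Walk.support_map _ _, List.mem_map]
    constructor
    · rintro ⟨x, hx, rfl⟩; exact ⟨x, hx, rfl⟩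
    · rintro ⟨x, hx, rfl⟩; exact ⟨x, hx, rfl⟩
  have mW2 : ∀ z : V × W, z ∈ W2.support ↔ ∃ q ∈ Q.support, z = (a, q) := by
    intro z
    rw [show W2.support = Q.support.map (fR G H a) from Walk.support_map _ _, List.mem_map]
    constructor
    · rintro ⟨x, hx, rfl⟩; exact ⟨x, hx, rfl⟩
    · rintro ⟨x, hx, rfl⟩; exact ⟨x, hx, rfl⟩
  have mW3 : ∀ z : V × W, z ∈ W3.support ↔ z = (a, w) ∨ z = (t, w) := by
    intro z
    simp [W3, Walk.support_cons]
  have mW4 : ∀ z : V × W, z ∈ W4.support ↔ z = (t, w) ∨ z = (c, w) := by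
    intro z
    simp [W4, Walk.support_cons]
  have mW5 : ∀ z : V × W, z ∈ W5.support ↔ ∃ q ∈ Q.support, z = (c, q) := by
    intro z
    rw [show W5.support = (Q.support.map (fR G H c)).reverse from
        (Walk.support_reverse _).trans (congrArg List.reverse (Walk.support_map _ _)),
      List.mem_reverse, List.mem_map]
    constructor
    · rintro ⟨x, hx, rfl⟩; exact ⟨x, hx, rfl⟩
    · rintro ⟨x, hx, rfl⟩; exact ⟨x, hx, rfl⟩
  have mW6 : ∀ z : V × W, z ∈ W6.support ↔ ∃ x ∈ B.support, z = (x, h) := by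
    intro z
    rw [show W6.support = B.support.map (fL G H h) from Walk.support_map _ _, List.mem_map]
    constructor
    · rintro ⟨x, hx, rfl⟩; exact ⟨x, hx, rfl⟩
    · rintro ⟨x, hx, rfl⟩; exact ⟨x, hx, rfl⟩
  -- induced segments
  have ind1 : IsInducedPath (G □ H) W1 := by
    refine map_induced _ hinjL hpA ?_
    intro x y hx hy hxy
    rcases hxy with ⟨hadj, _⟩ | ⟨hadj, _⟩
    · exact CA hx hy hadj
    · exact absurd hadj (H.loopless.irrefl _)
  have ind2 : IsInducedPath (G □ H) W2 := by
    refine map_induced _ hinjRa hQ.1 ?_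
    intro x y hx hy hxy
    rcases hxy with ⟨hadj, _⟩ | ⟨hadj, _⟩
    · exact absurd hadj (G.loopless.irrefl _)
    · exact CQ hx hy hadj
  have ind3 : IsInducedPath (G □ H) W3 := singleEdge_induced _
  have ind4 : IsInducedPath (G □ H) W4 := singleEdge_induced _
  have ind5 : IsInducedPath (G □ H) W5 := by
    refine induced_reverse (map_induced _ hinjRc hQ.1 ?_)
    intro x y hx hy hxy
    rcases hxy with ⟨hadj, _⟩ | ⟨hadj, _⟩
    · exact absurd hadj (G.loopless.irrefl _)
    · exact CQ hx hy hadj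
  have ind6 : IsInducedPath (G □ H) W6 := by
    refine map_induced _ hinjL hpB ?_
    intro x y hx hy hxy
    rcases hxy with ⟨hadj, _⟩ | ⟨hadj, _⟩
    · exact CB hx hy hadj
    · exact absurd hadj (H.loopless.irrefl _)
  -- assemble from the right
  have I56 : IsInducedPath (G □ H) (W5.append W6) := by
    refine append_induced ind5 ind6 ?_ ?_
    · intro v hv hv'
      rw [mW5] at hv; rw [mW6] at hv'
      obtain ⟨q, hq, rfl⟩ := hv
      obtain ⟨x, hx, hxq⟩ := hv'
      have h2 : q = h := congrArg Prod.snd hxq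
      exact Prod.ext rfl h2
    · intro z z' hz hz' hne hne' hadj
      rw [mW5] at hz; rw [mW6] at hz'
      obtain ⟨q, hq, rfl⟩ := hz
      obtain ⟨x, hx, rfl⟩ := hz'
      rcases hadj with ⟨hadj, h2⟩ | ⟨hadj, h2⟩
      · exact hne (Prod.ext rfl h2)
      · exact hne' (Prod.ext (show x = c from (show c = x from h2).symm) rfl)
  -- suffix membership characterizations
  have mP3 : ∀ z : V × W, z ∈ (W4.append (W5.append W6)).support ↔
      (z = (t, w) ∨ z = (c, w)) ∨ (∃ q ∈ Q.support, z = (c, q)) ∨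
      (∃ x ∈ B.support, z = (x, h)) := by
    intro z
    rw [Walk.mem_support_append_iff, Walk.mem_support_append_iff, mW4, mW5, mW6, or_assoc]
  have I456 : IsInducedPath (G □ H) (W4.append (W5.append W6)) := by
    refine append_induced ind4 I56 ?_ ?_
    · intro v hv hv'
      rw [mW4] at hv
      rw [Walk.mem_support_append_iff, mW5, mW6] at hv'
      rcases hv with rfl | rfl
      · exfalso
        rcases hv' with ⟨q, hq, heq⟩ | ⟨x, hx, heq⟩
        · exact htc (show t = c from congrArg Prod.fst heq)
        · exact htB ((show t = x from congrArg Prod.fst heq) ▸ hx)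
      · rfl
    · intro z z' hz hz' hne hne' hadj
      rw [mW4] at hz
      rw [Walk.mem_support_append_iff, mW5, mW6] at hz'
      rcases hz with rfl | rfl
      swap
      · exact hne rfl
      rcases hz' with ⟨q, hq, rfl⟩ | ⟨x, hx, rfl⟩
      · rcases hadj with ⟨hadj, h2⟩ | ⟨hadj, h2⟩
        · exact hne' (Prod.ext rfl (show w = q from h2).symm)
        · exact htc (show t = c from h2)
      · rcases hadj with ⟨hadj, h2⟩ | ⟨hadj, h2⟩
        · have hxc : x = c := Ctb hx hadj
          subst hxc
          exact hne' (Prod.ext rfl (show w = h from h2).symm)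
        · exact htB ((show t = x from h2) ▸ hx)
  have I3456 : IsInducedPath (G □ H) (W3.append (W4.append (W5.append W6))) := by
    refine append_induced ind3 I456 ?_ ?_
    · intro v hv hv'
      rw [mW3] at hv
      rw [mP3] at hv'
      rcases hv with rfl | rfl
      · exfalso
        rcases hv' with (heq | heq) | ⟨q, hq, heq⟩ | ⟨x, hx, heq⟩
        · exact hat (show a = t from congrArg Prod.fst heq)
        · exact hac (show a = c from congrArg Prod.fst heq)
        · exact hac (show a = c from congrArg Prod.fst heq)
        · exact haB ((show a = x from congrArg Prod.fst heq) ▸ hx)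
      · rfl
    · intro z z' hz hz' hne hne' hadj
      rw [mW3] at hz
      rw [mP3] at hz'
      rcases hz with rfl | rfl
      swap
      · exact hne rfl
      rcases hz' with (rfl | rfl) | ⟨q, hq, rfl⟩ | ⟨x, hx, rfl⟩
      · exact hne' rfl
      · rcases hadj with ⟨hadj, _⟩ | ⟨_, h2⟩
        · exact Cab haA hcB hadj
        · exact hac (show a = c from h2)
      · rcases hadj with ⟨hadj, _⟩ | ⟨_, h2⟩
        · exact Cab haA hcB hadj
        · exact hac (show a = c from h2)
      · rcases hadj with ⟨hadj, _⟩ | ⟨_, h2⟩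
        · exact Cab haA hx hadj
        · exact haB ((show a = x from h2) ▸ hx)
  have mP2 : ∀ z : V × W, z ∈ (W3.append (W4.append (W5.append W6))).support ↔
      z = (a, w) ∨ (z = (t, w) ∨ z = (c, w)) ∨ (∃ q ∈ Q.support, z = (c, q)) ∨
      (∃ x ∈ B.support, z = (x, h)) := by
    intro z
    rw [Walk.mem_support_append_iff, mW3, mP3]
    constructor
    · rintro ((h' | h') | h')
      · exact Or.inl h'
      · exact Or.inr (Or.inl (Or.inl h'))
      · exact Or.inr h'
    · rintro (h' | h')
      · exact Or.inl (Or.inl h')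
      · rcases h' with (h' | h') | h'
        · exact Or.inl (Or.inr h')
        · exact Or.inr (Or.inl (Or.inr h'))
        · exact Or.inr (Or.inr h')
  have I23456 : IsInducedPath (G □ H)
      (W2.append (W3.append (W4.append (W5.append W6)))) := by
    refine append_induced ind2 I3456 ?_ ?_
    · intro v hv hv'
      rw [mW2] at hv
      rw [mP2] at hv'
      obtain ⟨q, hq, rfl⟩ := hv
      rcases hv' with heq | (heq | heq) | ⟨q', hq', heq⟩ | ⟨x, hx, heq⟩
      · exact heq
      · exact absurd (show a = t from congrArg Prod.fst heq) hat
      · exact absurd (show a = c from congrArg Prod.fst heq) hac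
      · exact absurd (show a = c from congrArg Prod.fst heq) hac
      · exact absurd ((show a = x from congrArg Prod.fst heq) ▸ hx) haB
    · intro z z' hz hz' hne hne' hadj
      rw [mW2] at hz
      rw [mP2] at hz'
      obtain ⟨q, hq, rfl⟩ := hz
      have hqw : q ≠ w := fun h' => hne (Prod.ext rfl h')
      rcases hz' with rfl | (rfl | rfl) | ⟨q', hq', rfl⟩ | ⟨x, hx, rfl⟩
      · exact hne' rfl
      · rcases hadj with ⟨_, h2⟩ | ⟨_, h2⟩
        · exact hqw (show q = w from h2)
        · exact hat (show a = t from h2)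
      · rcases hadj with ⟨_, h2⟩ | ⟨_, h2⟩
        · exact hqw (show q = w from h2)
        · exact hac (show a = c from h2)
      · rcases hadj with ⟨hadj, _⟩ | ⟨_, h2⟩
        · exact Cab haA hcB hadj
        · exact hac (show a = c from h2)
      · rcases hadj with ⟨hadj, _⟩ | ⟨_, h2⟩
        · exact Cab haA hx hadj
        · exact haB ((show a = x from h2) ▸ hx)
  have mP1 : ∀ z : V × W, z ∈ (W2.append (W3.append (W4.append (W5.append W6)))).support ↔
      (∃ q ∈ Q.support, z = (a, q)) ∨ z = (t, w) ∨ z = (c, w) ∨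
      (∃ q ∈ Q.support, z = (c, q)) ∨ (∃ x ∈ B.support, z = (x, h)) := by
    intro z
    rw [Walk.mem_support_append_iff, mW2, mP2]
    constructor
    · rintro (hz | hz)
      · exact Or.inl hz
      · rcases hz with h' | (h' | h') | h' | h'
        · exact Or.inl ⟨w, hwQ, h'⟩
        · exact Or.inr (Or.inl h')
        · exact Or.inr (Or.inr (Or.inl h'))
        · exact Or.inr (Or.inr (Or.inr (Or.inl h')))
        · exact Or.inr (Or.inr (Or.inr (Or.inr h')))
    · rintro (hz | h' | h' | h' | h')
      · exact Or.inl hz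
      · exact Or.inr (Or.inr (Or.inl (Or.inl h')))
      · exact Or.inr (Or.inr (Or.inl (Or.inr h')))
      · exact Or.inr (Or.inr (Or.inr (Or.inl h')))
      · exact Or.inr (Or.inr (Or.inr (Or.inr h')))
  have Ifull : IsInducedPath (G □ H)
      (W1.append (W2.append (W3.append (W4.append (W5.append W6))))) := by
    refine append_induced ind1 I23456 ?_ ?_
    · intro v hv hv'
      rw [mW1] at hv
      rw [mP1] at hv'
      obtain ⟨x, hx, rfl⟩ := hv
      rcases hv' with ⟨q, hq, heq⟩ | heq | heq | ⟨q, hq, heq⟩ | ⟨y, hy, heq⟩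
      · exact Prod.ext (show x = a from congrArg Prod.fst heq) rfl
      · exact absurd ((show x = t from congrArg Prod.fst heq) ▸ hx) htA
      · exact absurd ((show x = c from congrArg Prod.fst heq) ▸ hx) hcA
      · exact absurd ((show x = c from congrArg Prod.fst heq) ▸ hx) hcA
      · exact absurd hy (fun h' => hAB ((show x = y from congrArg Prod.fst heq) ▸ hx) h')
    · intro z z' hz hz' hne hne' hadj
      rw [mW1] at hz
      rw [mP1] at hz'
      obtain ⟨x, hx, rfl⟩ := hz
      have hxa : x ≠ a := fun h' => hne (Prod.ext h' rfl)
      rcases hz' with ⟨q, hq, rfl⟩ | rfl | rfl | ⟨q, hq, rfl⟩ | ⟨y, hy, rfl⟩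
      · rcases hadj with ⟨hadj, h2⟩ | ⟨_, h2⟩
        · exact hne' (Prod.ext rfl (show h = q from h2).symm)
        · exact hxa (show x = a from h2)
      · rcases hadj with ⟨hadj, _⟩ | ⟨_, h2⟩
        · exact hxa (Cat hx hadj)
        · exact htA ((show x = t from h2) ▸ hx)
      · rcases hadj with ⟨hadj, _⟩ | ⟨_, h2⟩
        · exact Cab hx hcB hadj
        · exact hcA ((show x = c from h2) ▸ hx)
      · rcases hadj with ⟨hadj, _⟩ | ⟨_, h2⟩
        · exact Cab hx hcB hadj
        · exact hcA ((show x = c from h2) ▸ hx)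
      · rcases hadj with ⟨hadj, _⟩ | ⟨hadj, _⟩
        · exact Cab hx hy hadj
        · exact (H.loopless.irrefl _) hadj
  refine ⟨W1.append (W2.append (W3.append (W4.append (W5.append W6)))), Ifull, ?_, ?_, ?_⟩
  · rw [Walk.mem_support_append_iff, mP1]
    exact Or.inr (Or.inl ⟨w, hwQ, rfl⟩)
  · rw [Walk.mem_support_append_iff, mP1]
    exact Or.inr (Or.inr (Or.inl rfl))
  · rw [Walk.mem_support_append_iff, mP1]
    exact Or.inr (Or.inr (Or.inr (Or.inr (Or.inl ⟨w, hwQ, rfl⟩))))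

end Core

section MainAux
variable {V W : Type*} {G : SimpleGraph V} {H : SimpleGraph W}

lemma induced_adj_support {x y : V} {p : G.Walk x y} (hp : IsInducedPath G p)
    (hxy : G.Adj x y) : p.support = [x, y] := by
  cases p with
  | nil => exact absurd hxy (G.loopless.irrefl _)
  | @cons _ z _ e q =>
    have hx : x ∉ q.support := ((Walk.cons_isPath_iff e q).mp hp.1).2
    have hq : q.IsPath := ((Walk.cons_isPath_iff e q).mp hp.1).1
    have hadj := hp.2 x y (Walk.start_mem_support _) (Walk.end_mem_support _) hxy
    rw [toSub_adj_iff', Walk.edges_cons, List.mem_cons] at hadj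
    rcases hadj with he | he
    · rcases Sym2.eq_iff.mp he with ⟨_, rfl⟩ | ⟨h1, h2⟩
      · have : q = Walk.nil := Walk.isPath_iff_eq_nil.mp hq
        subst this
        simp
      · exact absurd h1 e.ne'.symm  -- x = z contradiction? e : Adj x z, h1 : x = z
    · exact absurd (Walk.fst_mem_support_of_mem_edges _ he) hx

lemma build₁ [DecidableEq V] {g₁ g₂ u : V} {h w : W} (P : G.Walk g₁ g₂)
    (hP : IsInducedPath G P) (hu : u ∈ P.support) (hug₂ : u ≠ g₂)
    (hnadj : ¬ G.Adj g₁ g₂) (hne : g₁ ≠ g₂)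
    {Q : H.Walk h w} (hQ : IsInducedPath H Q) :
    ∃ p : (G □ H).Walk ((g₁ : V), h) (g₂, h), IsInducedPath (G □ H) p ∧ (u, w) ∈ p.support := by
  by_cases hug₁ : u = g₁
  · subst hug₁
    cases P with
    | nil => exact absurd rfl hne
    | @cons _ z _ e1 P' =>
      cases P' with
      | nil => exact absurd e1 hnadj
      | @cons _ z' _ e2 B =>
        have hR : IsInducedPath G ((Walk.nil : G.Walk u u).append
            (Walk.cons e1 (Walk.cons e2 B))) := by
          rwa [Walk.nil_append]
        obtain ⟨p, hp, hmem, _, _⟩ := core Walk.nil e1 e2 B hR hQ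
        exact ⟨p, hp, hmem⟩
  · obtain ⟨D, B', hspec⟩ : ∃ (D : G.Walk u g₁) (B' : G.Walk u g₂), D.reverse.append B' = P :=
      ⟨(P.takeUntil u hu).reverse, P.dropUntil u hu, by
        rw [Walk.reverse_reverse]; exact P.take_spec hu⟩
    cases B' with
    | nil => exact absurd rfl hug₂
    | @cons _ c _ e2 B =>
      cases D with
      | nil => exact absurd rfl hug₁
      | @cons _ a _ e1 E =>
        rw [Walk.reverse_cons] at hspec
        have heq2 : E.reverse.append (Walk.cons e1.symm (Walk.cons e2 B)) = P := by
          rw [← hspec, ← Walk.append_assoc, Walk.cons_append, Walk.nil_append]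
        have hR : IsInducedPath G (E.reverse.append (Walk.cons e1.symm (Walk.cons e2 B))) :=
          heq2 ▸ hP
        obtain ⟨p, hp, _, hmem, _⟩ := core E.reverse e1.symm e2 B hR hQ
        exact ⟨p, hp, hmem⟩

end MainAux

theorem stmt18 {V W : Type*} [Fintype V] [Fintype W]
    (G : SimpleGraph V) (H : SimpleGraph W)
    (hG : G.Connected) (hH : H.Connected)
    (hcardG : 3 ≤ Fintype.card V) (hcardH : 2 ≤ Fintype.card W)
    (g₁ g₂ : V) (hm : IsMonophonicSet G {g₁, g₂}) (h : W) :
    IsMonophonicSet (G □ H) {(g₁, h), (g₂, h)} := by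
  classical
  have hne : g₁ ≠ g₂ := by
    rintro rfl
    obtain ⟨v, hv⟩ := Fintype.exists_ne_of_one_lt_card (by omega) g₁
    obtain ⟨x, hx, y, hy, p, hp, hmem⟩ := hm v
    have hx' : x = g₁ := by simpa using hx
    have hy' : y = g₁ := by simpa using hy
    subst hx'; subst hy'
    have : p = Walk.nil := Walk.isPath_iff_eq_nil.mp hp.1
    subst this
    simp only [Walk.support_nil, List.mem_singleton] at hmem
    exact hv hmem
  have hnadj : ¬ G.Adj g₁ g₂ := by
    intro hadj
    have hex : ∃ u0 : V, u0 ≠ g₁ ∧ u0 ≠ g₂ := by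
      by_contra hcon
      push_neg at hcon
      have hsub : (Finset.univ : Finset V) ⊆ {g₁, g₂} := by
        intro x _
        simp only [Finset.mem_insert, Finset.mem_singleton]
        rcases eq_or_ne x g₁ with rfl | hx
        · exact Or.inl rfl
        · exact Or.inr (hcon x hx)
      have hcard := Finset.card_le_card hsub
      rw [Finset.card_univ] at hcard
      have h2 : ({g₁, g₂} : Finset V).card ≤ 2 := by
        have := Finset.card_insert_le g₁ ({g₂} : Finset V)
        simpa using this
      omega
    obtain ⟨u0, hu1, hu2⟩ := hex
    obtain ⟨x, hx, y, hy, p, hp, hmem⟩ := hm u0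
    have hx' : x = g₁ ∨ x = g₂ := by simpa using hx
    have hy' : y = g₁ ∨ y = g₂ := by simpa using hy
    rcases hx' with rfl | rfl <;> rcases hy' with rfl | rfl
    · have : p = Walk.nil := Walk.isPath_iff_eq_nil.mp hp.1
      subst this
      simp only [Walk.support_nil, List.mem_singleton] at hmem
      exact hu1 hmem
    · rw [induced_adj_support hp hadj] at hmem
      simp only [List.mem_cons, List.mem_singleton, List.not_mem_nil, or_false] at hmem
      rcases hmem with rfl | rfl
      · exact hu1 rfl
      · exact hu2 rfl
    · rw [induced_adj_support hp hadj.symm] at hmem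
      simp only [List.mem_cons, List.mem_singleton, List.not_mem_nil, or_false] at hmem
      rcases hmem with rfl | rfl
      · exact hu2 rfl
      · exact hu1 rfl
    · have : p = Walk.nil := Walk.isPath_iff_eq_nil.mp hp.1
      subst this
      simp only [Walk.support_nil, List.mem_singleton] at hmem
      exact hu2 hmem
  rintro ⟨u, w⟩
  obtain ⟨Q, hQ⟩ := exists_induced ((hH.preconnected h w).some)
  obtain ⟨P0, hP0⟩ := exists_induced ((hG.preconnected g₁ g₂).some)
  by_cases hug₂ : u = g₂
  · obtain ⟨p, hp, hmem⟩ := build₁ (u := u) P0.reverse (induced_reverse hP0)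
      (by rw [hug₂]; exact Walk.start_mem_support _)
      (by rw [hug₂]; exact hne.symm) (fun h' => hnadj h'.symm) hne.symm hQ
    exact ⟨(g₂, h), Or.inr rfl, (g₁, h), Or.inl rfl, p, hp, hmem⟩
  · have key : ∃ (P : G.Walk g₁ g₂), IsInducedPath G P ∧ u ∈ P.support := by
      obtain ⟨x, hx, y, hy, p, hp, hmem⟩ := hm u
      have hx' : x = g₁ ∨ x = g₂ := by simpa using hx
      have hy' : y = g₁ ∨ y = g₂ := by simpa using hy
      rcases hx' with rfl | rfl <;> rcases hy' with rfl | rfl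
      · have : p = Walk.nil := Walk.isPath_iff_eq_nil.mp hp.1
        subst this
        simp only [Walk.support_nil, List.mem_singleton] at hmem
        subst hmem
        exact ⟨P0, hP0, Walk.start_mem_support _⟩
      · exact ⟨p, hp, hmem⟩
      · exact ⟨p.reverse, induced_reverse hp, by
          rw [Walk.support_reverse, List.mem_reverse]; exact hmem⟩
      · have : p = Walk.nil := Walk.isPath_iff_eq_nil.mp hp.1
        subst this
        simp only [Walk.support_nil, List.mem_singleton] at hmem
        exact absurd hmem hug₂
    obtain ⟨P, hP, hu⟩ := key
    obtain ⟨p, hp, hmem⟩ := build₁ P hP hu hug₂ hnadj hne hQ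
    exact ⟨(g₁, h), Or.inl rfl, (g₂, h), Or.inr rfl, p, hp, hmem⟩
end

section
/- For every n ≥ 2r ≥ 4 with r ≥ 2, the Johnson graph J(n,r) is strongly 2-monophonic: for every pair of vertices x,y with |x ∩ y| ≤ r − 2, every vertex of J(n,r) lies on an induced x,y-path. -/
open SimpleGraph

variable {V : Type*}

section Aux
open List

variable {V : Type*} {G : SimpleGraph V}

def walkOfFn (G : SimpleGraph V) (f : ℕ → V) :
    (m : ℕ) → (∀ i < m, G.Adj (f i) (f (i+1))) → G.Walk (f 0) (f m)
  | 0, _ => Walk.nil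
  | (m+1), h => (walkOfFn G f m (fun i hi => h i (by omega))).concat (h m (by omega))

lemma support_walkOfFn (f : ℕ → V) (m : ℕ) (h : ∀ i < m, G.Adj (f i) (f (i+1))) :
    (walkOfFn G f m h).support = (List.range (m+1)).map f := by
  induction m with
  | zero => simp [walkOfFn, List.range_succ]
  | succ m ih =>
    rw [walkOfFn, Walk.support_concat, ih, List.range_succ]
    simp [List.range_succ]

lemma edges_walkOfFn (f : ℕ → V) (m : ℕ) (h : ∀ i < m, G.Adj (f i) (f (i+1))) :
    (walkOfFn G f m h).edges = (List.range m).map (fun i => s(f i, f (i+1))) := by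
  induction m with
  | zero => simp [walkOfFn]
  | succ m ih =>
    rw [walkOfFn, Walk.edges_concat, ih, List.range_succ]
    simp

lemma toSubgraph_adj_of_mem_edges {u v a b : V} (p : G.Walk u v)
    (h : s(a,b) ∈ p.edges) : p.toSubgraph.Adj a b :=
  (Walk.mem_edges_toSubgraph p).mpr h

lemma inducedPath_of_fn (G : SimpleGraph V) (f : ℕ → V) (m : ℕ)
    (hadj : ∀ i < m, G.Adj (f i) (f (i+1)))
    (hfar : ∀ i j, i + 2 ≤ j → j ≤ m → ¬ G.Adj (f i) (f j) ∧ f i ≠ f j) :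
    ∃ p : G.Walk (f 0) (f m), IsInducedPath G p ∧ ∀ k ≤ m, f k ∈ p.support := by
  have hinj : ∀ i j, i < j → j ≤ m → f i ≠ f j := by
    intro i j hij hjm
    rcases Nat.lt_or_ge (i+1) j with h' | h'
    · exact (hfar i j (by omega) hjm).2
    · have : j = i + 1 := by omega
      subst this
      exact (hadj i (by omega)).ne
  refine ⟨walkOfFn G f m hadj, ⟨?_, ?_⟩, ?_⟩
  · apply Walk.IsPath.mk'
    rw [support_walkOfFn]
    rw [List.nodup_map_iff_inj_on List.nodup_range]
    intro i hi j hj hfij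
    by_contra hne
    simp only [List.mem_range] at hi hj
    rcases Nat.lt_or_ge i j with h' | h'
    · exact hinj i j h' (by omega) hfij
    · exact hinj j i (by omega) (by omega) hfij.symm
  · intro a b ha hb hab
    rw [support_walkOfFn] at ha hb
    simp only [List.mem_map, List.mem_range] at ha hb
    obtain ⟨i, hi, rfl⟩ := ha
    obtain ⟨j, hj, rfl⟩ := hb
    have hne : i ≠ j := by rintro rfl; exact hab.ne rfl
    have hcons : (i + 1 = j) ∨ (j + 1 = i) := by
      by_contra hc
      push_neg at hc
      rcases Nat.lt_or_ge i j with h' | h'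
      · exact (hfar i j (by omega) (by omega)).1 hab
      · exact (hfar j i (by omega) (by omega)).1 hab.symm
    apply toSubgraph_adj_of_mem_edges
    rw [edges_walkOfFn]
    rcases hcons with h' | h'
    · subst h'
      simp only [List.mem_map, List.mem_range]
      exact ⟨i, by omega, rfl⟩
    · subst h'
      simp only [List.mem_map, List.mem_range]
      exact ⟨j, by omega, Sym2.eq_swap⟩
  · intro k hk
    rw [support_walkOfFn]
    simp only [List.mem_map, List.mem_range]
    exact ⟨k, by omega, rfl⟩

variable {α : Type*} [DecidableEq α]

lemma take_toFinset_subset (l : List α) (i : ℕ) : (l.take i).toFinset ⊆ l.toFinset := by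
  intro x hx
  simp only [List.mem_toFinset] at *
  exact List.mem_of_mem_take hx

lemma take_toFinset_mono (l : List α) {i j : ℕ} (h : i ≤ j) :
    (l.take i).toFinset ⊆ (l.take j).toFinset := by
  intro x hx
  simp only [List.mem_toFinset] at *
  have : l.take i = (l.take j).take i := by rw [List.take_take, Nat.min_eq_left h]
  rw [this] at hx; exact List.mem_of_mem_take hx

lemma take_toFinset_card (l : List α) (hl : l.Nodup) {i : ℕ} (h : i ≤ l.length) :
    (l.take i).toFinset.card = i := by
  rw [List.toFinset_card_of_nodup (hl.sublist (List.take_sublist _ _)), List.length_take]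
  omega

lemma take_toFinset_full (l : List α) {i : ℕ} (h : l.length ≤ i) :
    (l.take i).toFinset = l.toFinset := by
  rw [List.take_of_length_le h]

lemma append_toList_nodup (U : Finset α) (lv : List α) (hv : lv.Nodup)
    (h : Disjoint U lv.toFinset) : (U.toList ++ lv).Nodup := by
  rw [List.nodup_append]
  refine ⟨U.nodup_toList, hv, ?_⟩
  intro a ha b hb hab
  subst hab
  exact Finset.disjoint_left.mp h (Finset.mem_toList.mp ha) (List.mem_toFinset.mpr hb)

lemma append_toList_toFinset (U : Finset α) (lv : List α) :
    (U.toList ++ lv).toFinset = U ∪ lv.toFinset := by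
  rw [List.toFinset_append]; simp

lemma take_inter_drop_card (l : List α) (hl : l.Nodup) (a c : ℕ) :
    ((l.take a).toFinset ∩ (l.drop c).toFinset).card ≤ a - c := by
  rcases le_or_gt a c with h | h
  · have hsub : (l.take a).toFinset ⊆ (l.take c).toFinset := take_toFinset_mono l h
    have hdisj : Disjoint (l.take c).toFinset (l.drop c).toFinset := by
      rw [List.disjoint_toFinset_iff_disjoint]
      have := hl
      rw [← List.take_append_drop c l, List.nodup_append] at this
      intro a ha hb
      exact this.2.2 a ha a hb rfl
    have : (l.take a).toFinset ∩ (l.drop c).toFinset = ∅ := by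
      apply Finset.eq_empty_of_forall_notMem
      intro x hx
      rw [Finset.mem_inter] at hx
      exact (Finset.disjoint_left.mp hdisj) (hsub hx.1) hx.2
    simp [this]
  · have key := Finset.card_inter_add_card_union (l.take a).toFinset (l.drop c).toFinset
    have h1 : (l.take a).toFinset.card = min a l.length := by
      rw [List.toFinset_card_of_nodup (hl.sublist (List.take_sublist _ _)), List.length_take]
    have h2 : (l.drop c).toFinset.card = l.length - c := by
      rw [List.toFinset_card_of_nodup (hl.sublist (List.drop_sublist _ _)), List.length_drop]
    have h3 : l.toFinset ⊆ (l.take a).toFinset ∪ (l.drop c).toFinset := by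
      intro x hx
      simp only [List.mem_toFinset, Finset.mem_union] at *
      rw [← List.take_append_drop c l, List.mem_append] at hx
      rcases hx with hx | hx
      · left
        have : l.take c = (l.take a).take c := by rw [List.take_take, Nat.min_eq_left (le_of_lt h)]
        rw [this] at hx
        exact List.mem_of_mem_take hx
      · right; exact hx
    have h4 : l.length ≤ ((l.take a).toFinset ∪ (l.drop c).toFinset).card := by
      rw [← List.toFinset_card_of_nodup hl]
      exact Finset.card_le_card h3
    omega

lemma take_inter_take_reverse_card (l : List α) (hl : l.Nodup) (a b : ℕ) :
    ((l.take a).toFinset ∩ (l.reverse.take b).toFinset).card ≤ a - (l.length - b) := by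
  rw [List.take_reverse]
  have hrev : (l.drop (l.length - b)).reverse.toFinset = (l.drop (l.length - b)).toFinset := by
    simp
  rw [hrev]
  exact take_inter_drop_card l hl a (l.length - b)

lemma inter_cross (w A B C D : Finset α)
    (hB : Disjoint B w) (hD : Disjoint D w) :
    ((w \ A) ∪ B) ∩ ((w \ C) ∪ D) = (w \ (A ∪ C)) ∪ (B ∩ D) := by
  ext x
  simp only [Finset.mem_inter, Finset.mem_union, Finset.mem_sdiff]
  have hB' : x ∈ B → x ∉ w := fun h => Finset.disjoint_left.mp hB h
  have hD' : x ∈ D → x ∉ w := fun h => Finset.disjoint_left.mp hD h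
  tauto

-- nested intersection identity

lemma inter_nested (w A A' B B' : Finset α) (hAA : A' ⊆ A)
    (hBB : B' ⊆ B) (hB : Disjoint B w) :
    ((w \ A) ∪ B) ∩ ((w \ A') ∪ B') = (w \ A) ∪ B' := by
  ext x
  simp only [Finset.mem_inter, Finset.mem_union, Finset.mem_sdiff]
  have hB' : x ∈ B → x ∉ w := fun h => Finset.disjoint_left.mp hB h
  have h1 : x ∈ A' → x ∈ A := fun h => hAA h
  have h2 : x ∈ B' → x ∈ B := fun h => hBB h
  tauto

lemma card_sdiff_union (w A B : Finset α) (hA : A ⊆ w) (hB : Disjoint B w) :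
    ((w \ A) ∪ B).card = w.card - A.card + B.card := by
  rw [Finset.card_union_of_disjoint, Finset.card_sdiff_of_subset hA]
  exact Disjoint.symm (hB.mono_right (Finset.sdiff_subset))

lemma cross_bound (P Q S : Finset α) (a b : ℕ)
    (hPQ : Disjoint P Q) (hPS : Disjoint P S) (hQS : Disjoint Q S) :
    ((((P.toList ++ S.toList).take a).toFinset ∩
      ((Q.toList ++ S.toList.reverse).take b).toFinset)).card
      ≤ (a - P.card) - (S.card - (b - Q.card)) := by
  have hA : ((P.toList ++ S.toList).take a).toFinset
      = (P.toList.take a).toFinset ∪ ((S.toList.take (a - P.card))).toFinset := by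
    rw [List.take_append, List.toFinset_append, Finset.length_toList]
  have hC : ((Q.toList ++ S.toList.reverse).take b).toFinset
      = (Q.toList.take b).toFinset ∪ ((S.toList.reverse.take (b - Q.card))).toFinset := by
    rw [List.take_append, List.toFinset_append, Finset.length_toList]
  have hsub : (((P.toList ++ S.toList).take a).toFinset ∩
      ((Q.toList ++ S.toList.reverse).take b).toFinset)
      ⊆ ((S.toList.take (a - P.card))).toFinset ∩
        ((S.toList.reverse.take (b - Q.card))).toFinset := by
    rw [hA, hC]
    intro z hz
    simp only [Finset.mem_inter, Finset.mem_union] at hz ⊢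
    have hzP : z ∈ (P.toList.take a).toFinset → z ∈ P := by
      intro h; have := take_toFinset_subset P.toList a h; simpa using this
    have hzQ : z ∈ (Q.toList.take b).toFinset → z ∈ Q := by
      intro h; have := take_toFinset_subset Q.toList b h; simpa using this
    have hzS1 : z ∈ (S.toList.take (a - P.card)).toFinset → z ∈ S := by
      intro h; have := take_toFinset_subset S.toList _ h; simpa using this
    have hzS2 : z ∈ (S.toList.reverse.take (b - Q.card)).toFinset → z ∈ S := by
      intro h; have := take_toFinset_subset S.toList.reverse _ h; simpa using this
    have d1 : z ∈ P → z ∉ Q := fun h => Finset.disjoint_left.mp hPQ h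
    have d2 : z ∈ P → z ∉ S := fun h => Finset.disjoint_left.mp hPS h
    have d3 : z ∈ Q → z ∉ S := fun h => Finset.disjoint_left.mp hQS h
    rcases hz with ⟨h1 | h1, h2 | h2⟩
    · exact absurd (hzQ h2) (d1 (hzP h1))
    · exact absurd (hzS2 h2) (d2 (hzP h1))
    · exact absurd (hzS1 h1) ((fun h => (d3 (hzQ h2)) h))
    · exact ⟨h1, h2⟩
  calc _ ≤ (((S.toList.take (a - P.card))).toFinset ∩
        ((S.toList.reverse.take (b - Q.card))).toFinset).card := Finset.card_le_card hsub
    _ ≤ (a - P.card) - (S.toList.length - (b - Q.card)) :=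
        take_inter_take_reverse_card S.toList S.nodup_toList _ _
    _ = (a - P.card) - (S.card - (b - Q.card)) := by rw [Finset.length_toList]

noncomputable def jf (w P S P2 T Q Q2 : Finset α) (k : ℕ) : Finset α :=
  if k ≤ P.card + S.card then
    (w \ ((P.toList ++ S.toList).take (P.card + S.card - k)).toFinset)
      ∪ ((P2.toList ++ T.toList).take (P.card + S.card - k)).toFinset
  else
    (w \ ((Q.toList ++ S.toList.reverse).take (k - (P.card + S.card))).toFinset)
      ∪ ((Q2.toList ++ T.toList.reverse).take (k - (P.card + S.card))).toFinset

lemma jf_rep1 (w P S P2 T Q Q2 : Finset α) (k : ℕ) (h : k ≤ P.card + S.card) :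
    jf w P S P2 T Q Q2 k =
    (w \ ((P.toList ++ S.toList).take (P.card + S.card - k)).toFinset)
      ∪ ((P2.toList ++ T.toList).take (P.card + S.card - k)).toFinset := by
  rw [jf, if_pos h]

lemma jf_rep2 (w P S P2 T Q Q2 : Finset α) (k : ℕ) (h : P.card + S.card ≤ k) :
    jf w P S P2 T Q Q2 k =
    (w \ ((Q.toList ++ S.toList.reverse).take (k - (P.card + S.card))).toFinset)
      ∪ ((Q2.toList ++ T.toList.reverse).take (k - (P.card + S.card))).toFinset := by
  rcases eq_or_lt_of_le h with h' | h'
  · rw [jf, if_pos h'.symm.le]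
    have h0 : P.card + S.card - k = 0 := by omega
    have h0' : k - (P.card + S.card) = 0 := by omega
    rw [h0, h0']
    simp
  · rw [jf, if_neg (by omega)]

set_option maxHeartbeats 1000000 in
lemma johnson_core (r : ℕ) (hr : 2 ≤ r) (w x y P Q S P2 Q2 T : Finset α)
    (hw : w.card = r)
    (hwx : w \ x = P ∪ S) (hxw : x \ w = P2 ∪ T)
    (hwy : w \ y = Q ∪ S) (hyw : y \ w = Q2 ∪ T)
    (hdPS : Disjoint P S) (hdQS : Disjoint Q S) (hdPQ : Disjoint P Q)
    (hdP2T : Disjoint P2 T) (hdQ2T : Disjoint Q2 T) (hdP2Q2 : Disjoint P2 Q2)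
    (hlen1 : P.card + S.card = P2.card + T.card)
    (hlen2 : Q.card + S.card = Q2.card + T.card)
    (hineq : T.card + 2 ≤ P.card + Q.card + S.card) :
    ∃ (f : ℕ → Finset α) (m mw : ℕ), f 0 = x ∧ f m = y ∧ mw ≤ m ∧ f mw = w ∧
      (∀ k, k ≤ m → (f k).card = r) ∧
      (∀ i, i < m → (f i ∩ f (i+1)).card = r - 1) ∧
      (∀ i j, i + 2 ≤ j → j ≤ m → (f i ∩ f j).card ≤ r - 2) := by
  set d1 := P.card + S.card with hd1
  set d2 := Q.card + S.card with hd2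
  -- list facts
  have hLAnodup : (P.toList ++ S.toList).Nodup :=
    append_toList_nodup P S.toList S.nodup_toList (by simpa using hdPS)
  have hLBnodup : (P2.toList ++ T.toList).Nodup :=
    append_toList_nodup P2 T.toList T.nodup_toList (by simpa using hdP2T)
  have hLCnodup : (Q.toList ++ S.toList.reverse).Nodup :=
    append_toList_nodup Q S.toList.reverse (List.nodup_reverse.mpr S.nodup_toList)
      (by simpa using hdQS)
  have hLDnodup : (Q2.toList ++ T.toList.reverse).Nodup :=
    append_toList_nodup Q2 T.toList.reverse (List.nodup_reverse.mpr T.nodup_toList)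
      (by simpa using hdQ2T)
  have hLAlen : (P.toList ++ S.toList).length = d1 := by simp [hd1]
  have hLBlen : (P2.toList ++ T.toList).length = d1 := by simp; omega
  have hLClen : (Q.toList ++ S.toList.reverse).length = d2 := by simp [hd2]
  have hLDlen : (Q2.toList ++ T.toList.reverse).length = d2 := by simp; omega
  have hLAfin : (P.toList ++ S.toList).toFinset = w \ x := by
    rw [append_toList_toFinset]; simp [hwx]
  have hLBfin : (P2.toList ++ T.toList).toFinset = x \ w := by
    rw [append_toList_toFinset]; simp [hxw]
  have hLCfin : (Q.toList ++ S.toList.reverse).toFinset = w \ y := by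
    rw [append_toList_toFinset]; simp [hwy]
  have hLDfin : (Q2.toList ++ T.toList.reverse).toFinset = y \ w := by
    rw [append_toList_toFinset]; simp [hyw]
  -- subsets
  have hAw : ∀ i, ((P.toList ++ S.toList).take i).toFinset ⊆ w := fun i =>
    ((take_toFinset_subset _ _).trans (by rw [hLAfin]; exact Finset.sdiff_subset))
  have hCw : ∀ i, ((Q.toList ++ S.toList.reverse).take i).toFinset ⊆ w := fun i =>
    ((take_toFinset_subset _ _).trans (by rw [hLCfin]; exact Finset.sdiff_subset))
  have hBd : ∀ i, Disjoint (((P2.toList ++ T.toList).take i).toFinset) w := fun i => by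
    have h1 : ((P2.toList ++ T.toList).take i).toFinset ⊆ x \ w :=
      (take_toFinset_subset _ _).trans (by rw [hLBfin])
    exact Finset.disjoint_left.mpr fun a ha hw' =>
      (Finset.mem_sdiff.mp (h1 ha)).2 hw'
  have hDd : ∀ i, Disjoint (((Q2.toList ++ T.toList.reverse).take i).toFinset) w := fun i => by
    have h1 : ((Q2.toList ++ T.toList.reverse).take i).toFinset ⊆ y \ w :=
      (take_toFinset_subset _ _).trans (by rw [hLDfin])
    exact Finset.disjoint_left.mpr fun a ha hw' =>
      (Finset.mem_sdiff.mp (h1 ha)).2 hw'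
  -- cards
  have hd1r : d1 ≤ r := by
    have h1 : (w \ x).card ≤ w.card := Finset.card_le_card Finset.sdiff_subset
    rw [hwx, Finset.card_union_of_disjoint hdPS, hw] at h1
    omega
  have hd2r : d2 ≤ r := by
    have h1 : (w \ y).card ≤ w.card := Finset.card_le_card Finset.sdiff_subset
    rw [hwy, Finset.card_union_of_disjoint hdQS, hw] at h1
    omega
  have hAcard : ∀ i ≤ d1, (((P.toList ++ S.toList).take i).toFinset).card = i := fun i hi =>
    take_toFinset_card _ hLAnodup (by omega)
  have hBcard : ∀ i ≤ d1, (((P2.toList ++ T.toList).take i).toFinset).card = i := fun i hi =>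
    take_toFinset_card _ hLBnodup (by omega)
  have hCcard : ∀ i ≤ d2, (((Q.toList ++ S.toList.reverse).take i).toFinset).card = i :=
    fun i hi => take_toFinset_card _ hLCnodup (by omega)
  have hDcard : ∀ i ≤ d2, (((Q2.toList ++ T.toList.reverse).take i).toFinset).card = i :=
    fun i hi => take_toFinset_card _ hLDnodup (by omega)
  refine ⟨jf w P S P2 T Q Q2, d1 + d2, d1, ?_, ?_, by omega, ?_, ?_, ?_, ?_⟩
  · -- f 0 = x
    rw [jf_rep1 _ _ _ _ _ _ _ 0 (by omega), Nat.sub_zero,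
      take_toFinset_full _ (le_of_eq hLAlen), take_toFinset_full _ (le_of_eq hLBlen),
      hLAfin, hLBfin]
    ext a
    simp only [Finset.mem_union, Finset.mem_sdiff]
    tauto
  · -- f m = y
    rw [jf_rep2 _ _ _ _ _ _ _ (d1 + d2) (by omega), Nat.add_sub_cancel_left,
      take_toFinset_full _ (le_of_eq hLClen), take_toFinset_full _ (le_of_eq hLDlen),
      hLCfin, hLDfin]
    ext a
    simp only [Finset.mem_union, Finset.mem_sdiff]
    tauto
  · -- f d1 = w
    rw [jf_rep1 _ _ _ _ _ _ _ d1 le_rfl, Nat.sub_self]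
    simp
  · -- cards
    intro k hk
    by_cases h : k ≤ d1
    · rw [jf_rep1 _ _ _ _ _ _ _ k h,
        card_sdiff_union _ _ _ (hAw _) (hBd _), hAcard _ (by omega), hBcard _ (by omega), hw]
      omega
    · rw [jf_rep2 _ _ _ _ _ _ _ k (by omega),
        card_sdiff_union _ _ _ (hCw _) (hDd _), hCcard _ (by omega), hDcard _ (by omega), hw]
      omega
  · -- consecutive
    intro i hi
    by_cases h : i + 1 ≤ d1
    · have hmA : ((P.toList ++ S.toList).take (d1 - (i+1))).toFinset ⊆
          ((P.toList ++ S.toList).take (d1 - i)).toFinset := take_toFinset_mono _ (by omega)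
      have hmB : ((P2.toList ++ T.toList).take (d1 - (i+1))).toFinset ⊆
          ((P2.toList ++ T.toList).take (d1 - i)).toFinset := take_toFinset_mono _ (by omega)
      rw [jf_rep1 _ _ _ _ _ _ _ i (by omega), jf_rep1 _ _ _ _ _ _ _ (i+1) h,
        inter_nested _ _ _ _ _ hmA hmB (hBd _),
        card_sdiff_union _ _ _ (hAw _) (hBd _), hAcard _ (by omega), hBcard _ (by omega), hw]
      omega
    · have hmC : ((Q.toList ++ S.toList.reverse).take (i - d1)).toFinset ⊆
          ((Q.toList ++ S.toList.reverse).take (i + 1 - d1)).toFinset :=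
        take_toFinset_mono _ (by omega)
      have hmD : ((Q2.toList ++ T.toList.reverse).take (i - d1)).toFinset ⊆
          ((Q2.toList ++ T.toList.reverse).take (i + 1 - d1)).toFinset :=
        take_toFinset_mono _ (by omega)
      rw [jf_rep2 _ _ _ _ _ _ _ i (by omega), jf_rep2 _ _ _ _ _ _ _ (i+1) (by omega),
        Finset.inter_comm,
        inter_nested _ _ _ _ _ hmC hmD (hDd _),
        card_sdiff_union _ _ _ (hCw _) (hDd _), hCcard _ (by omega), hDcard _ (by omega), hw]
      omega
  · -- far apart
    intro i j hij hjm
    by_cases h1 : j ≤ d1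
    · have hmA : ((P.toList ++ S.toList).take (d1 - j)).toFinset ⊆
          ((P.toList ++ S.toList).take (d1 - i)).toFinset := take_toFinset_mono _ (by omega)
      have hmB : ((P2.toList ++ T.toList).take (d1 - j)).toFinset ⊆
          ((P2.toList ++ T.toList).take (d1 - i)).toFinset := take_toFinset_mono _ (by omega)
      rw [jf_rep1 _ _ _ _ _ _ _ i (by omega), jf_rep1 _ _ _ _ _ _ _ j h1,
        inter_nested _ _ _ _ _ hmA hmB (hBd _),
        card_sdiff_union _ _ _ (hAw _) (hBd _), hAcard _ (by omega), hBcard _ (by omega), hw]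
      omega
    · by_cases h2 : d1 ≤ i
      · have hmC : ((Q.toList ++ S.toList.reverse).take (i - d1)).toFinset ⊆
            ((Q.toList ++ S.toList.reverse).take (j - d1)).toFinset :=
          take_toFinset_mono _ (by omega)
        have hmD : ((Q2.toList ++ T.toList.reverse).take (i - d1)).toFinset ⊆
            ((Q2.toList ++ T.toList.reverse).take (j - d1)).toFinset :=
          take_toFinset_mono _ (by omega)
        rw [jf_rep2 _ _ _ _ _ _ _ i h2, jf_rep2 _ _ _ _ _ _ _ j (by omega),
          Finset.inter_comm,
          inter_nested _ _ _ _ _ hmC hmD (hDd _),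
          card_sdiff_union _ _ _ (hCw _) (hDd _), hCcard _ (by omega), hDcard _ (by omega), hw]
        omega
      · -- cross case
        have ha1 : 1 ≤ d1 - i := by omega
        have hb1 : 1 ≤ j - d1 := by omega
        rw [jf_rep1 _ _ _ _ _ _ _ i (by omega), jf_rep2 _ _ _ _ _ _ _ j (by omega),
          inter_cross _ _ _ _ _ (hBd _) (hDd _)]
        have hsubw : ((P.toList ++ S.toList).take (d1 - i)).toFinset ∪
            ((Q.toList ++ S.toList.reverse).take (j - d1)).toFinset ⊆ w :=
          Finset.union_subset (hAw _) (hCw _)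
        have hBDd : Disjoint ((((P2.toList ++ T.toList).take (d1 - i)).toFinset) ∩
            (((Q2.toList ++ T.toList.reverse).take (j - d1)).toFinset)) w :=
          (hBd _).mono_left Finset.inter_subset_left
        rw [card_sdiff_union _ _ _ hsubw hBDd, hw]
        have hu := Finset.card_union_add_card_inter
          (((P.toList ++ S.toList).take (d1 - i)).toFinset)
          (((Q.toList ++ S.toList.reverse).take (j - d1)).toFinset)
        rw [hAcard _ (by omega), hCcard _ (by omega)] at hu
        have hac := cross_bound P Q S (d1 - i) (j - d1) hdPQ hdPS hdQS
        have hbd := cross_bound P2 Q2 T (d1 - i) (j - d1) hdP2Q2 hdP2T hdQ2T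
        have hur : (((P.toList ++ S.toList).take (d1 - i)).toFinset ∪
            ((Q.toList ++ S.toList.reverse).take (j - d1)).toFinset).card ≤ r := by
          have := Finset.card_le_card hsubw
          omega
        omega

lemma johnson_key (r : ℕ) (hr : 2 ≤ r) (x y w : Finset α)
    (hx : x.card = r) (hy : y.card = r) (hw : w.card = r)
    (hxy : (x ∩ y).card ≤ r - 2) :
    ∃ (f : ℕ → Finset α) (m mw : ℕ), f 0 = x ∧ f m = y ∧ mw ≤ m ∧ f mw = w ∧
      (∀ k, k ≤ m → (f k).card = r) ∧
      (∀ i, i < m → (f i ∩ f (i+1)).card = r - 1) ∧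
      (∀ i j, i + 2 ≤ j → j ≤ m → (f i ∩ f j).card ≤ r - 2) := by
  set P := (y ∩ w) \ x with hP
  set Q := (x ∩ w) \ y with hQ
  set S := (w \ x) \ y with hS
  set P2 := (x \ y) \ w with hP2
  set Q2 := (y \ x) \ w with hQ2
  set T := (x ∩ y) \ w with hT
  have hwx : w \ x = P ∪ S := by
    ext a; simp only [hP, hS, Finset.mem_union, Finset.mem_sdiff, Finset.mem_inter]; tauto
  have hxw : x \ w = P2 ∪ T := by
    ext a; simp only [hP2, hT, Finset.mem_union, Finset.mem_sdiff, Finset.mem_inter]; tauto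
  have hwy : w \ y = Q ∪ S := by
    ext a; simp only [hQ, hS, Finset.mem_union, Finset.mem_sdiff, Finset.mem_inter]; tauto
  have hyw : y \ w = Q2 ∪ T := by
    ext a; simp only [hQ2, hT, Finset.mem_union, Finset.mem_sdiff, Finset.mem_inter]; tauto
  have hdPS : Disjoint P S := by
    rw [Finset.disjoint_left]
    intro a ha hb
    simp only [hP, hS, Finset.mem_sdiff, Finset.mem_inter] at ha hb; tauto
  have hdQS : Disjoint Q S := by
    rw [Finset.disjoint_left]
    intro a ha hb
    simp only [hQ, hS, Finset.mem_sdiff, Finset.mem_inter] at ha hb; tauto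
  have hdPQ : Disjoint P Q := by
    rw [Finset.disjoint_left]
    intro a ha hb
    simp only [hP, hQ, Finset.mem_sdiff, Finset.mem_inter] at ha hb; tauto
  have hdP2T : Disjoint P2 T := by
    rw [Finset.disjoint_left]
    intro a ha hb
    simp only [hP2, hT, Finset.mem_sdiff, Finset.mem_inter] at ha hb; tauto
  have hdQ2T : Disjoint Q2 T := by
    rw [Finset.disjoint_left]
    intro a ha hb
    simp only [hQ2, hT, Finset.mem_sdiff, Finset.mem_inter] at ha hb; tauto
  have hdP2Q2 : Disjoint P2 Q2 := by
    rw [Finset.disjoint_left]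
    intro a ha hb
    simp only [hP2, hQ2, Finset.mem_sdiff, Finset.mem_inter] at ha hb; tauto
  have hcwx : (w \ x).card = P.card + S.card := by
    rw [hwx, Finset.card_union_of_disjoint hdPS]
  have hcxw : (x \ w).card = P2.card + T.card := by
    rw [hxw, Finset.card_union_of_disjoint hdP2T]
  have hcwy : (w \ y).card = Q.card + S.card := by
    rw [hwy, Finset.card_union_of_disjoint hdQS]
  have hcyw : (y \ w).card = Q2.card + T.card := by
    rw [hyw, Finset.card_union_of_disjoint hdQ2T]
  have e1 : (w \ x).card + (w ∩ x).card = w.card := Finset.card_sdiff_add_card_inter w x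
  have e2 : (x \ w).card + (x ∩ w).card = x.card := Finset.card_sdiff_add_card_inter x w
  have e3 : (w \ y).card + (w ∩ y).card = w.card := Finset.card_sdiff_add_card_inter w y
  have e4 : (y \ w).card + (y ∩ w).card = y.card := Finset.card_sdiff_add_card_inter y w
  have ec1 : (w ∩ x).card = (x ∩ w).card := by rw [Finset.inter_comm]
  have ec2 : (w ∩ y).card = (y ∩ w).card := by rw [Finset.inter_comm]
  have hlen1 : P.card + S.card = P2.card + T.card := by omega
  have hlen2 : Q.card + S.card = Q2.card + T.card := by omega
  have hwxy : w \ (x ∩ y) = P ∪ Q ∪ S := by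
    ext a
    simp only [hP, hQ, hS, Finset.mem_union, Finset.mem_sdiff, Finset.mem_inter]; tauto
  have hdPQS : Disjoint (P ∪ Q) S := Finset.disjoint_union_left.mpr ⟨hdPS, hdQS⟩
  have hcwxy : (w \ (x ∩ y)).card = P.card + Q.card + S.card := by
    rw [hwxy, Finset.card_union_of_disjoint hdPQS, Finset.card_union_of_disjoint hdPQ]
  have e5 : (w \ (x ∩ y)).card + (w ∩ (x ∩ y)).card = w.card :=
    Finset.card_sdiff_add_card_inter w (x ∩ y)
  have e6 : ((x ∩ y) \ w).card + ((x ∩ y) ∩ w).card = (x ∩ y).card :=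
    Finset.card_sdiff_add_card_inter (x ∩ y) w
  have ec3 : (w ∩ (x ∩ y)).card = ((x ∩ y) ∩ w).card := by rw [Finset.inter_comm]
  have hTcard : T.card = ((x ∩ y) \ w).card := by rw [hT]
  have hineq : T.card + 2 ≤ P.card + Q.card + S.card := by omega
  exact johnson_core r hr w x y P Q S P2 Q2 T hw hwx hxw hwy hyw hdPS hdQS hdPQ
    hdP2T hdQ2T hdP2Q2 hlen1 hlen2 hineq

lemma johnson_mono (n r : ℕ) (hr : 2 ≤ r) (x y : {s : Finset (Fin n) // s.card = r})
    (hxy : (x.1 ∩ y.1).card ≤ r - 2) :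
    IsMonophonicSet (johnson n r) {x, y} := by
  intro w
  refine ⟨x, Set.mem_insert _ _, y, Set.mem_insert_of_mem _ rfl, ?_⟩
  obtain ⟨f, m, mw, hf0, hfm, hmwm, hfmw, hcards, hcons, hfar⟩ :=
    johnson_key r hr x.1 y.1 w.1 x.2 y.2 w.2 hxy
  set F : ℕ → {s : Finset (Fin n) // s.card = r} :=
    fun k => if h : k ≤ m then ⟨f k, hcards k h⟩ else ⟨f 0, hcards 0 (Nat.zero_le m)⟩ with hF
  have hFval : ∀ k ≤ m, (F k).1 = f k := by
    intro k hk; simp only [hF, dif_pos hk]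
  have hadj : ∀ i < m, (johnson n r).Adj (F i) (F (i+1)) := by
    intro i hi
    have h1 := hFval i (by omega)
    have h2 := hFval (i+1) (by omega)
    constructor
    · intro he
      have : (F i).1 = (F (i+1)).1 := congrArg Subtype.val he
      rw [h1, h2] at this
      have hc := hcons i hi
      rw [← this, Finset.inter_self, hcards i (by omega)] at hc
      omega
    · rw [h1, h2]; exact hcons i hi
  have hfar' : ∀ i j, i + 2 ≤ j → j ≤ m →
      ¬ (johnson n r).Adj (F i) (F j) ∧ F i ≠ F j := by
    intro i j hij hjm
    have h1 := hFval i (by omega)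
    have h2 := hFval j hjm
    have hc := hfar i j hij hjm
    have hne : F i ≠ F j := by
      intro he
      have : (F i).1 = (F j).1 := congrArg Subtype.val he
      rw [h1, h2] at this
      rw [← this, Finset.inter_self, hcards i (by omega)] at hc
      omega
    refine ⟨?_, hne⟩
    rintro ⟨-, hadj2⟩
    rw [h1, h2] at hadj2
    omega
  obtain ⟨p, hip, hsup⟩ := inducedPath_of_fn (johnson n r) F m hadj hfar'
  have hF0 : F 0 = x := Subtype.ext (by rw [hFval 0 (Nat.zero_le m)]; exact hf0)
  have hFm : F m = y := Subtype.ext (by rw [hFval m le_rfl]; exact hfm)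
  have hFmw : F mw = w := Subtype.ext (by rw [hFval mw hmwm]; exact hfmw)
  rw [← hF0, ← hFm]
  exact ⟨p, hip, hFmw ▸ hsup mw hmwm⟩

theorem stmt19 (n r : ℕ) (hr : 2 ≤ r) (hn : 2 * r ≤ n) :
    Strongly2Monophonic (johnson n r) ∧
    ∀ x y : {s : Finset (Fin n) // s.card = r},
      (x.1 ∩ y.1).card ≤ r - 2 →
      IsMonophonicSet (johnson n r) {x, y} := by
  constructor
  · intro x y hne hnadj
    apply johnson_mono n r hr
    have h1 : (x.1 ∩ y.1).card ≤ r := by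
      calc (x.1 ∩ y.1).card ≤ x.1.card := Finset.card_le_card Finset.inter_subset_left
        _ = r := x.2
    have h2 : (x.1 ∩ y.1).card ≠ r := by
      intro he
      have hsub : x.1 ∩ y.1 = x.1 := Finset.eq_of_subset_of_card_le
        Finset.inter_subset_left (by rw [he, x.2])
      have hxy : x.1 ⊆ y.1 := by rw [← hsub]; exact Finset.inter_subset_right
      have : x.1 = y.1 := Finset.eq_of_subset_of_card_le hxy (by rw [x.2, y.2])
      exact hne (Subtype.ext this)
    have h3 : (x.1 ∩ y.1).card ≠ r - 1 := fun he => hnadj ⟨hne, he⟩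
    omega
  · intro x y hxy
    exact johnson_mono n r hr x y hxy

end Aux
end
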